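/- arXiv:0707.3169 — 14 statements merged into one kernel-verified Lean document; each statement's English description precedes it below -/
import Mathlib

section
/- For a nonincreasing summable sequence ξ of nonnegative reals and any integer m ≥ 2, the m-fold ampliation of the arithmetic mean at infinity is dominated by the arithmetic mean at infinity of the m-fold ampliation: (D_m ξ_{a∞})_j ≤ ((D_m ξ)_{a∞})_j for all j ≥ 1. -/
open scoped BigOperators
open Filter

noncomputable def ainf (f : ℕ → ℝ) (n : ℕ) : ℝ := (1 / (n : ℝ)) * ∑' k : ℕ, f (n + 1 + k)

noncomputable def ces (f : ℕ → ℝ) (n : ℕ) : ℝ := (1 / (n : ℝ)) * ∑ j ∈ Finset.Icc 1 n, f j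

noncomputable def ampl (m : ℕ) (f : ℕ → ℝ) (j : ℕ) : ℝ := f ((j + m - 1) / m)
theorem stmt_0 (ξ : ℕ → ℝ)
    (hmono : ∀ n, 1 ≤ n → ξ (n + 1) ≤ ξ n)
    (hnn : ∀ n, 1 ≤ n → 0 ≤ ξ n)
    (hsum : Summable ξ)
    (m : ℕ) (hm : 2 ≤ m) (j : ℕ) (hj : 1 ≤ j) :
    ampl m (ainf ξ) j ≤ ainf (ampl m ξ) j := by
  have hm0 : 0 < m := by omega
  haveI : NeZero m := ⟨by omega⟩
  set n := (j + m - 1) / m with hn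
  have hn1 : 1 ≤ n := by rw [hn, Nat.one_le_div_iff hm0]; omega
  have hjmn : j ≤ m * n := by
    have h1 : m * n + (j + m - 1) % m = j + m - 1 := by rw [hn]; exact Nat.div_add_mod _ _
    have h2 := Nat.mod_lt (j + m - 1) hm0
    omega
  set c : ℕ → ℝ := fun q => ξ (n + 1 + q) with hc
  have hcs : Summable c := by
    have := (summable_nat_add_iff (f := ξ) (n + 1)).2 hsum
    simp only [hc]
    exact this.congr fun q => by rw [add_comm]
  have hcnn : ∀ q, 0 ≤ c q := fun q => hnn _ (by omega)
  set T : ℝ := ∑' q, c q with hT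
  have hTnn : 0 ≤ T := tsum_nonneg hcnn
  -- Summability of the product version
  have hF : Summable (fun p : ℕ × Fin m => c p.1) := by
    have h1 : Summable (fun _ : Fin m => (1 : ℝ)) := Summable.of_finite
    have := hcs.mul_of_nonneg h1 hcnn (fun _ => zero_le_one)
    simpa using this
  have hFval : ∑' p : ℕ × Fin m, c p.1 = m * T := by
    rw [Summable.tsum_prod' hF (fun b => Summable.of_finite)]
    have : ∀ q : ℕ, ∑' _ : Fin m, c q = (m : ℝ) * c q := by
      intro q
      rw [tsum_fintype]
      simp [Finset.sum_const, nsmul_eq_mul]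
    simp_rw [this]
    rw [tsum_mul_left]
  -- the tail of the ampliation at m*n sums to m*T
  have key : HasSum (fun k => ampl m ξ (m * n + 1 + k)) (m * T) := by
    rw [← (Nat.divModEquiv m).symm.hasSum_iff]
    have hcomp : ((fun k => ampl m ξ (m * n + 1 + k)) ∘ (Nat.divModEquiv m).symm)
        = fun p : ℕ × Fin m => c p.1 := by
      funext p
      obtain ⟨q, r⟩ := p
      have hr : (r : ℕ) < m := r.isLt
      show ampl m ξ (m * n + 1 + (q * m + (r : ℕ))) = c q
      have h1 : m * n + 1 + (q * m + (r : ℕ)) + m - 1 = m * (n + 1 + q) + (r : ℕ) := by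
        have h2 : m * (n + 1 + q) = m * n + m * q + m := by ring
        rw [h2, mul_comm q m]
        omega
      unfold ampl
      rw [h1, Nat.mul_add_div hm0, Nat.div_eq_of_lt hr, add_zero]
    rw [hcomp]
    exact hFval ▸ hF.hasSum
  -- summability of the shifted ampliation at j
  have hamplsum : Summable (ampl m ξ) := by
    have h1 : Summable (fun k => ampl m ξ (k + (m * n + 1))) :=
      key.summable.congr fun k => by rw [add_comm]
    exact (summable_nat_add_iff (m * n + 1)).1 h1
  have hgs : Summable (fun k => ampl m ξ (j + 1 + k)) := by
    have := (summable_nat_add_iff (f := ampl m ξ) (j + 1)).2 hamplsum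
    exact this.congr fun k => by rw [add_comm]
  have hampnn : ∀ i, 1 ≤ i → 0 ≤ ampl m ξ i := by
    intro i hi
    apply hnn
    rw [Nat.one_le_div_iff hm0]
    omega
  -- tail comparison
  have hcomp2 : ∑' k, ampl m ξ (m * n + 1 + k) ≤ ∑' k, ampl m ξ (j + 1 + k) := by
    apply key.summable.tsum_le_tsum_of_inj (fun k => (m * n - j) + k)
    · exact add_right_injective _
    · exact fun i _ => hampnn _ (by omega)
    · intro k
      have h3 : j + 1 + ((m * n - j) + k) = m * n + 1 + k := by omega
      rw [h3]
    · exact hgs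
  have hsumval : m * T ≤ ∑' k, ampl m ξ (j + 1 + k) := key.tsum_eq ▸ hcomp2
  -- finish
  show (1 / (n : ℝ)) * (∑' k, ξ (n + 1 + k)) ≤ (1 / (j : ℝ)) * ∑' k, ampl m ξ (j + 1 + k)
  have hTdef : (∑' k, ξ (n + 1 + k)) = T := rfl
  rw [hTdef]
  have hj0 : (0 : ℝ) < j := by exact_mod_cast hj
  have hmn0 : (0 : ℝ) < (m : ℝ) * n := by positivity
  calc (1 / (n : ℝ)) * T = (1 / ((m : ℝ) * n)) * ((m : ℝ) * T) := by
        field_simp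
    _ ≤ (1 / (j : ℝ)) * ((m : ℝ) * T) := by
        apply mul_le_mul_of_nonneg_right _ (by positivity)
        apply one_div_le_one_div_of_le hj0
        exact_mod_cast hjmn
    _ ≤ (1 / (j : ℝ)) * ∑' k, ampl m ξ (j + 1 + k) := by
        apply mul_le_mul_of_nonneg_left hsumval (by positivity)
end

section
/- For a nonincreasing summable sequence ξ of nonnegative reals and any integer m ≥ 2, one has (D_m ξ_{a∞})_j ≥ ((D_{m-1} ξ)_{a∞})_j for all j ≥ (m-1)(m-2). -/
open scoped BigOperators
open Filter

theorem stmt_1 (ξ : ℕ → ℝ)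
    (hmono : ∀ n, 1 ≤ n → ξ (n + 1) ≤ ξ n)
    (hnn : ∀ n, 1 ≤ n → 0 ≤ ξ n)
    (hsum : Summable ξ)
    (m : ℕ) (hm : 2 ≤ m) (j : ℕ) (hj : 1 ≤ j) (hj' : (m - 1) * (m - 2) ≤ j) :
    ainf (ampl (m - 1) ξ) j ≤ ampl m (ainf ξ) j := by
  have hmono' : ∀ a b : ℕ, 1 ≤ a → a ≤ b → ξ b ≤ ξ a := by
    intro a b ha hab
    induction b with
    | zero => omega
    | succ b ih =>
      rcases Nat.lt_or_ge a (b+1) with h | h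
      · exact le_trans (hmono b (by omega)) (ih (by omega))
      · have : a = b + 1 := by omega
        rw [this]
  set q := m - 1 with hqdef
  have hq0 : 0 < q := by omega
  set y := j / q with hy
  set i0 := y + 1 with hi0def
  set n := (j + m - 1) / m with hndef
  have hdm := Nat.div_add_mod j q
  rw [← hy] at hdm
  have hmlt : j % q < q := Nat.mod_lt _ hq0
  have hqi0 : q * i0 = q * y + q := by rw [hi0def]; ring
  have hjlt : j < q * i0 := by omega
  have hjge : q * i0 ≤ j + q := by omega
  set r := q * i0 - j with hrdef
  have hr1 : 1 ≤ r := by omega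
  have hrq : r ≤ q := by omega
  have hjr : j + r = q * i0 := by omega
  -- key: n * q ≤ j
  have hnm : m * n ≤ j + m - 1 := by
    rw [hndef]; exact Nat.mul_div_le _ _
  have hkey : q * n ≤ j := by
    rcases Nat.lt_or_ge n (m-1) with h | h
    · exact le_trans (Nat.mul_le_mul_left q (by omega : n ≤ m - 2)) hj'
    · have : q * n = m * n - 1 * n := by rw [hqdef, Nat.sub_mul]
      omega
  -- n ≤ i0
  have hn1 : 1 ≤ n := by
    have : m ≤ j + m - 1 := by omega
    have := Nat.one_le_div_iff (by omega : 0 < m) |>.2 this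
    omega
  have hni0 : n ≤ i0 := by
    have h1 : n ≤ (j + m) / m := Nat.div_le_div_right (by omega)
    have h2 : (j + m) / m = j / m + 1 := by
      rw [Nat.add_div_right _ (by omega)]
    have h3 : j / m ≤ j / q := Nat.div_le_div_left (by omega) hq0
    omega
  -- tail summability
  have htail : ∀ p : ℕ, Summable (fun k => ξ (p + k)) := by
    intro p
    have := (summable_nat_add_iff (f := ξ) p).2 hsum
    exact this.congr (fun k => by rw [Nat.add_comm])
  set T := ∑' k : ℕ, ξ (i0 + 1 + k) with hT
  have hT0 : 0 ≤ T := tsum_nonneg (fun k => hnn _ (by omega))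
  have hxi0 : 0 ≤ ξ i0 := hnn _ (by omega)
  -- grouped function g
  have hgsum : Summable (fun k : ℕ => ξ (i0 + 1 + k / q)) ∧
      (∑' k : ℕ, ξ (i0 + 1 + k / q)) = (q : ℝ) * T := by
    have hqne : NeZero q := ⟨by omega⟩
    have hprod : Summable (fun p : ℕ × Fin q => ξ (i0 + 1 + p.1)) := by
      apply (summable_prod_of_nonneg (fun p => hnn _ (by omega))).2
      constructor
      · intro b; exact (hasSum_fintype _).summable
      · apply Summable.congr ((htail (i0+1)).mul_left (q:ℝ))
        intro b
        rw [tsum_fintype]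
        simp [Finset.sum_const, Finset.card_univ]
    have heq : ∀ k : ℕ, ξ (i0 + 1 + k / q) =
        (fun p : ℕ × Fin q => ξ (i0 + 1 + p.1)) (Nat.divModEquiv q k) := by
      intro k; rfl
    constructor
    · exact (Equiv.summable_iff (Nat.divModEquiv q)).2 hprod |>.congr (fun k => (heq k).symm)
    · rw [tsum_congr heq,
        Equiv.tsum_eq (Nat.divModEquiv q) (fun p : ℕ × Fin q => ξ (i0 + 1 + p.1)),
        Summable.tsum_prod' hprod (fun b => (hasSum_fintype _).summable)]
      calc (∑' (b : ℕ) (_ : Fin q), ξ (i0 + 1 + b)) = ∑' b : ℕ, (q : ℝ) * ξ (i0 + 1 + b) := by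
            apply tsum_congr; intro b
            rw [tsum_fintype]
            simp [Finset.sum_const, Finset.card_univ, mul_comm]
        _ = (q : ℝ) * T := by rw [hT, tsum_mul_left]
  set f : ℕ → ℝ := fun k => ξ ((j + k + q) / q) with hf
  have hq1 : q * (i0 + 1) = q * i0 + q := by ring
  have hf2 : ∀ k : ℕ, f (k + r) = ξ (i0 + 1 + k / q) := by
    intro k
    have harg : j + (k + r) + q = q * (i0 + 1) + k := by omega
    rw [hf]
    simp only
    rw [harg, Nat.mul_add_div hq0]
  have hfsum : Summable f := by
    apply (summable_nat_add_iff r).1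
    exact hgsum.1.congr (fun k => (hf2 k).symm)
  have hfval : ∀ i : ℕ, i < r → f i = ξ i0 := by
    intro i hi
    rw [hf]
    simp only
    congr 1
    have e1 : i0 * q ≤ j + i + q := by
      have : i0 * q = q * i0 := by ring
      omega
    have e2 : j + i + q < (i0 + 1) * q := by
      have : (i0 + 1) * q = q * i0 + q := by ring
      omega
    exact Nat.div_eq_of_lt_le e1 e2
  -- value of the LHS tsum
  have hLsum : ∑' k : ℕ, f k = (r : ℝ) * ξ i0 + (q : ℝ) * T := by
    rw [← Summable.sum_add_tsum_nat_add r hfsum]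
    congr 1
    · rw [Finset.sum_congr rfl (fun i hi => hfval i (Finset.mem_range.1 hi)),
        Finset.sum_const, Finset.card_range, nsmul_eq_mul]
    · rw [tsum_congr hf2, hgsum.2]
  -- RHS tsum
  have hRsummable : Summable (fun k : ℕ => ξ (n + 1 + k)) := htail (n + 1)
  have hRsplit : ((i0 - n : ℕ) : ℝ) * ξ i0 + T ≤ ∑' k : ℕ, ξ (n + 1 + k) := by
    rw [← Summable.sum_add_tsum_nat_add (i0 - n) hRsummable]
    have htailT : ∑' i : ℕ, ξ (n + 1 + (i + (i0 - n))) = T := by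
      refine tsum_congr (fun i => ?_)
      congr 1
      omega
    rw [htailT]
    refine add_le_add_left ?_ T
    calc ((i0 - n : ℕ) : ℝ) * ξ i0 = ∑ _i ∈ Finset.range (i0 - n), ξ i0 := by
          rw [Finset.sum_const, Finset.card_range, nsmul_eq_mul]
      _ ≤ ∑ i ∈ Finset.range (i0 - n), ξ (n + 1 + i) := by
          refine Finset.sum_le_sum (fun i hi => ?_)
          have hi' := Finset.mem_range.1 hi
          exact hmono' (n + 1 + i) i0 (by omega) (by omega)
  -- the key numeric inequality
  have hkey2 : n * r ≤ j * (i0 - n) := by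
    have h1 : n * (q * i0) ≤ j * i0 := by
      calc n * (q * i0) = (q * n) * i0 := by ring
        _ ≤ j * i0 := Nat.mul_le_mul_right i0 hkey
    have h2 : n * r = n * (q * i0) - n * j := by
      rw [hrdef, Nat.mul_sub_left_distrib]
    have h3 : j * (i0 - n) = j * i0 - j * n := Nat.mul_sub_left_distrib _ _ _
    have h4 : n * j = j * n := Nat.mul_comm _ _
    omega
  -- cast inequalities
  have hj0R : (0:ℝ) < (j:ℝ) := by exact_mod_cast hj
  have hn0R : (0:ℝ) < (n:ℝ) := by exact_mod_cast hn1
  have hstep : (1 / (j:ℝ)) * ((r : ℝ) * ξ i0 + (q : ℝ) * T)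
      ≤ (1 / (n:ℝ)) * (((i0 - n : ℕ) : ℝ) * ξ i0 + T) := by
    rw [one_div_mul_eq_div, one_div_mul_eq_div, div_le_div_iff₀ hj0R hn0R]
    have c1 : ((n:ℝ)) * ((r:ℝ) * ξ i0) ≤ ((j:ℝ)) * (((i0 - n : ℕ):ℝ) * ξ i0) := by
      have : ((n * r : ℕ) : ℝ) ≤ ((j * (i0 - n) : ℕ) : ℝ) := by exact_mod_cast hkey2
      push_cast at this
      nlinarith [hxi0]
    have c2 : ((n:ℝ)) * ((q:ℝ) * T) ≤ ((j:ℝ)) * T := by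
      have : ((q * n : ℕ) : ℝ) ≤ ((j : ℕ) : ℝ) := by exact_mod_cast hkey
      push_cast at this
      nlinarith [hT0]
    nlinarith [c1, c2]
  -- unfold and conclude
  have hLHS : ainf (ampl q ξ) j = (1 / (j:ℝ)) * ∑' k : ℕ, f k := by
    rw [ainf]
    congr 1
    refine tsum_congr (fun k => ?_)
    rw [ampl, hf]
    simp only
    congr 2
    omega
  have hRHS : ampl m (ainf ξ) j = (1 / (n:ℝ)) * ∑' k : ℕ, ξ (n + 1 + k) := by
    rw [ampl, ainf, ← hndef]
  rw [hLHS, hRHS, hLsum]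
  refine le_trans hstep ?_
  apply mul_le_mul_of_nonneg_left hRsplit
  positivity
end

section
/- For a nonincreasing summable sequence ξ of nonnegative reals and any integer m ≥ 2, one has (D_m ξ_{a∞})_j ≥ (1/(2(m-1))) (D_{m-1} ξ)_j for all j ≥ 2m(m-1). -/
open scoped BigOperators
open Filter

theorem stmt_2 (ξ : ℕ → ℝ)
    (hmono : ∀ n, 1 ≤ n → ξ (n + 1) ≤ ξ n)
    (hnn : ∀ n, 1 ≤ n → 0 ≤ ξ n)
    (hsum : Summable ξ)
    (m : ℕ) (hm : 2 ≤ m) (j : ℕ) (hj : 2 * m * (m - 1) ≤ j) :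
    (1 / (2 * ((m : ℝ) - 1))) * ampl (m - 1) ξ j ≤ ampl m (ainf ξ) j := by
  have hanti : ∀ a b : ℕ, 1 ≤ a → a ≤ b → ξ b ≤ ξ a := by
    intro a b ha hab
    induction b, hab using Nat.le_induction with
    | base => exact le_rfl
    | succ b hb ih => exact (hmono b (ha.trans hb)).trans ih
  have hj4 : 4 ≤ j := by
    refine le_trans ?_ hj
    calc 4 = 2 * 2 * 1 := rfl
      _ ≤ 2 * m * (m - 1) := Nat.mul_le_mul (Nat.mul_le_mul le_rfl hm) (by omega)
  set n := (j + m - 1) / m with hn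
  have hidx : j + (m - 1) - 1 = j + m - 2 := by omega
  simp only [ampl, ainf, hidx]
  set p := (j + m - 2) / (m - 1) with hpdef
  -- nat facts
  have h1 : j ≤ p * (m - 1) := by
    have hd := Nat.div_add_mod (j + m - 2) (m - 1)
    have hr := Nat.mod_lt (j + m - 2) (show 0 < m - 1 by omega)
    obtain ⟨q, hq⟩ : ∃ q, q = (m - 1) * ((j + m - 2) / (m - 1)) := ⟨_, rfl⟩
    rw [← hq] at hd
    show j ≤ (j + m - 2) / (m - 1) * (m - 1)
    rw [mul_comm, ← hq]
    omega
  have h2 : n * m ≤ j + m - 1 := Nat.div_mul_le_self _ _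
  have hn1 : 1 ≤ n := by
    rw [hn, Nat.le_div_iff_mul_le (by omega)]; omega
  -- real facts
  have hmR : (2:ℝ) ≤ (m:ℝ) := by exact_mod_cast hm
  have hc1 : (j:ℝ) ≤ (p:ℝ) * ((m:ℝ) - 1) := by
    have := (Nat.cast_le (α := ℝ)).mpr h1
    push_cast [Nat.cast_sub (show 1 ≤ m by omega)] at this
    linarith
  have hc2 : (n:ℝ) * m ≤ (j:ℝ) + (m:ℝ) - 1 := by
    have := (Nat.cast_le (α := ℝ)).mpr h2
    push_cast [Nat.cast_sub (show 1 ≤ j + m by omega)] at this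
    linarith
  have hc3 : 2 * (m:ℝ) * ((m:ℝ) - 1) ≤ (j:ℝ) := by
    have := (Nat.cast_le (α := ℝ)).mpr hj
    push_cast [Nat.cast_sub (show 1 ≤ m by omega)] at this
    linarith
  have hcn1 : (1:ℝ) ≤ (n:ℝ) := by exact_mod_cast hn1
  have hkey : (n:ℝ) ≤ 2 * ((m:ℝ) - 1) * ((p:ℝ) - (n:ℝ)) := by
    nlinarith [mul_le_mul_of_nonneg_left hc1 (show (0:ℝ) ≤ 2 * m by linarith),
      mul_le_mul_of_nonneg_left hc2 (show (0:ℝ) ≤ 2 * m - 1 by linarith)]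
  have hpn : n < p := by
    have : (n:ℝ) < (p:ℝ) := by nlinarith
    exact_mod_cast this
  -- summability of tail
  have hS : Summable (fun k => ξ (n + 1 + k)) := by
    have := (summable_nat_add_iff (f := ξ) (n + 1)).mpr hsum
    simpa [add_comm] using this
  have hξp : 0 ≤ ξ p := hnn p (by omega)
  have hT : ((p - n : ℕ) : ℝ) * ξ p ≤ ∑' k : ℕ, ξ (n + 1 + k) := by
    calc ((p - n : ℕ) : ℝ) * ξ p = (Finset.range (p - n)).card • ξ p := by
          simp [nsmul_eq_mul]
      _ ≤ ∑ k ∈ Finset.range (p - n), ξ (n + 1 + k) := by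
          refine Finset.card_nsmul_le_sum _ _ _ (fun k hk => ?_)
          have hk' : k < p - n := Finset.mem_range.mp hk
          exact hanti (n + 1 + k) p (by omega) (by omega)
      _ ≤ ∑' k : ℕ, ξ (n + 1 + k) :=
          Summable.sum_le_tsum _ (fun k _ => hnn _ (by omega)) hS
  have hcast : ((p - n : ℕ) : ℝ) = (p:ℝ) - (n:ℝ) := by
    push_cast [Nat.cast_sub hpn.le]; ring
  have hnpos : (0:ℝ) < (n:ℝ) := by linarith
  have h2m : (0:ℝ) < 2 * ((m:ℝ) - 1) := by linarith
  rw [hcast] at hT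
  have hstep : (1 / (2 * ((m:ℝ) - 1))) * ξ p ≤ (1 / (n:ℝ)) * (((p:ℝ) - (n:ℝ)) * ξ p) := by
    rw [one_div, one_div, inv_mul_eq_div, inv_mul_eq_div, div_le_div_iff₀ h2m hnpos]
    nlinarith
  calc (1 / (2 * ((m:ℝ) - 1))) * ξ p ≤ (1 / (n:ℝ)) * (((p:ℝ) - (n:ℝ)) * ξ p) := hstep
    _ ≤ (1 / (n:ℝ)) * ∑' k : ℕ, ξ (n + 1 + k) := by
        apply mul_le_mul_of_nonneg_left hT
        positivity
end

section
/- For a nonincreasing summable sequence ξ of nonnegative reals and any integer m ≥ 2, ξ_{mj} ≤ (1/(m-1)) (ξ_{a∞})_j for all j ≥ 1. -/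
open scoped BigOperators
open Filter

lemma anti_aux (ξ : ℕ → ℝ) (hmono : ∀ n, 1 ≤ n → ξ (n + 1) ≤ ξ n)
    (a b : ℕ) (ha : 1 ≤ a) (hab : a ≤ b) : ξ b ≤ ξ a := by
  induction b with
  | zero => omega
  | succ n ih =>
    rcases Nat.lt_or_ge a (n+1) with h | h
    · exact le_trans (hmono n (by omega)) (ih (by omega))
    · have : a = n + 1 := by omega
      simp [this]

theorem stmt_3 (ξ : ℕ → ℝ)
    (hmono : ∀ n, 1 ≤ n → ξ (n + 1) ≤ ξ n)
    (hnn : ∀ n, 1 ≤ n → 0 ≤ ξ n)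
    (hsum : Summable ξ)
    (m : ℕ) (hm : 2 ≤ m) (j : ℕ) (hj : 1 ≤ j) :
    ξ (m * j) ≤ (1 / ((m : ℝ) - 1)) * ainf ξ j := by
  have hsum' : Summable (fun k : ℕ => ξ (j + 1 + k)) :=
    (summable_nat_add_iff (j+1)).2 hsum |>.congr (fun k => by ring_nf)
  have hlb : ((m - 1) * j : ℕ) • ξ (m * j) ≤
      ∑ k ∈ Finset.range ((m - 1) * j), ξ (j + 1 + k) := by
    have := Finset.card_nsmul_le_sum (Finset.range ((m - 1) * j))
      (fun k => ξ (j + 1 + k)) (ξ (m * j)) (fun k hk => by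
        simp only [Finset.mem_range] at hk
        exact anti_aux ξ hmono (j + 1 + k) (m * j) (by omega)
          (by nlinarith [Nat.sub_add_cancel (by omega : 1 ≤ m)]))
    simpa using this
  have hts : ∑ k ∈ Finset.range ((m - 1) * j), ξ (j + 1 + k) ≤
      ∑' k : ℕ, ξ (j + 1 + k) := by
    apply Summable.sum_le_tsum _ _ hsum'
    intro k _
    exact hnn _ (by omega)
  have hcast : (((m - 1) * j : ℕ) : ℝ) = ((m:ℝ) - 1) * j := by
    push_cast [Nat.cast_sub (by omega : 1 ≤ m)]; ring
  have key : ((m:ℝ) - 1) * j * ξ (m * j) ≤ ∑' k : ℕ, ξ (j + 1 + k) := by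
    calc ((m:ℝ) - 1) * j * ξ (m * j) = (((m-1)*j : ℕ) : ℝ) * ξ (m*j) := by rw [hcast]
    _ ≤ ∑ k ∈ Finset.range ((m - 1) * j), ξ (j + 1 + k) := by
        simpa [nsmul_eq_mul] using hlb
    _ ≤ _ := hts
  have hm1 : (0:ℝ) < (m:ℝ) - 1 := by
    have : (2:ℝ) ≤ m := by exact_mod_cast hm
    linarith
  have hjpos : (0:ℝ) < j := by exact_mod_cast hj
  rw [ainf]
  rw [div_mul_eq_mul_div, one_mul, le_div_iff₀ hm1, div_mul_eq_mul_div, one_mul,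
    le_div_iff₀ hjpos] at *
  nlinarith [key]
end

section
/- If a nonincreasing summable sequence ξ of nonnegative reals satisfies the Δ_{1/2}-condition (there exists M with ξ_n ≤ M ξ_{2n} for all n), then its arithmetic mean at infinity ξ_{a∞} also satisfies the Δ_{1/2}-condition. -/
open scoped BigOperators
open Filter

theorem stmt_4 (ξ : ℕ → ℝ)
    (hmono : ∀ n, 1 ≤ n → ξ (n + 1) ≤ ξ n)
    (hnn : ∀ n, 1 ≤ n → 0 ≤ ξ n)
    (hsum : Summable ξ)
    (h : ∃ M : ℝ, ∀ n, 1 ≤ n → ξ n ≤ M * ξ (2 * n)) :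
    ∃ M : ℝ, ∀ n, 1 ≤ n → ainf ξ n ≤ M * ainf ξ (2 * n) := by
  obtain ⟨M, hM⟩ := h
  set K := max M 0 with hKdef
  have hK0 : (0:ℝ) ≤ K := le_max_right _ _
  have hΔ : ∀ n, 1 ≤ n → ξ n ≤ K * ξ (2 * n) := fun n hn =>
    (hM n hn).trans (mul_le_mul_of_nonneg_right (le_max_left _ _) (hnn _ (by omega)))
  have hanti : ∀ a b : ℕ, 1 ≤ a → a ≤ b → ξ b ≤ ξ a := by
    intro a b ha hab
    induction b with
    | zero => omega
    | succ b ih =>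
      rcases Nat.lt_or_ge a (b+1) with h' | h'
      · exact (hmono b (by omega)).trans (ih (by omega))
      · have : a = b + 1 := by omega
        simp [this]
  have hs : ∀ m : ℕ, Summable (fun k => ξ (k + m)) := fun m =>
    (summable_nat_add_iff m).2 hsum
  refine ⟨2 + K^2, fun n hn => ?_⟩
  have hn0 : (0:ℝ) < (n:ℝ) := by exact_mod_cast Nat.pos_of_ne_zero (by omega)
  have ha1 : ainf ξ n = (1/(n:ℝ)) * ∑' k, ξ (k + (n+1)) := by
    unfold ainf
    congr 1
    exact tsum_congr fun k => congrArg ξ (by omega)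
  have ha2 : ainf ξ (2*n) = (1/(2*(n:ℝ))) * ∑' k, ξ (k + (2*n+1)) := by
    unfold ainf
    congr 1
    · push_cast; ring
    · exact tsum_congr fun k => congrArg ξ (by omega)
  set T1 := ∑' k, ξ (k + (n+1)) with hT1
  set T2 := ∑' k, ξ (k + (2*n+1)) with hT2
  have hsplit : T1 = (∑ i ∈ Finset.range n, ξ (i + (n+1))) + T2 := by
    have hh := Summable.sum_add_tsum_nat_add (f := fun i => ξ (i + (n+1))) n (hs (n+1))
    rw [hT1, ← hh]
    congr 1
    exact tsum_congr fun k => congrArg ξ (by omega)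
  have hT2nn : 0 ≤ T2 := tsum_nonneg fun k => hnn _ (by omega)
  have hmid : (∑ i ∈ Finset.range n, ξ (i + (n+1))) ≤ (n:ℝ) * ξ (n+1) := by
    calc (∑ i ∈ Finset.range n, ξ (i + (n+1)))
        ≤ ∑ i ∈ Finset.range n, ξ (n+1) :=
          Finset.sum_le_sum fun i _ => hanti (n+1) (i + (n+1)) (by omega) (by omega)
      _ = (n:ℝ) * ξ (n+1) := by simp [mul_comm]
  have hlow : 2 * (n:ℝ) * ξ (4*n+4) ≤ T2 := by
    have h1 : (∑ i ∈ Finset.range (2*n), ξ (4*n+4)) ≤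
        ∑ i ∈ Finset.range (2*n), ξ (i + (2*n+1)) :=
      Finset.sum_le_sum fun i hi => by
        have : i < 2*n := Finset.mem_range.mp hi
        exact hanti (i + (2*n+1)) (4*n+4) (by omega) (by omega)
    have h2 : (∑ i ∈ Finset.range (2*n), ξ (i + (2*n+1))) ≤ T2 :=
      Summable.sum_le_tsum _ (fun i _ => hnn _ (by omega)) (hs _)
    have h3 : (∑ i ∈ Finset.range (2*n), ξ (4*n+4)) = 2 * (n:ℝ) * ξ (4*n+4) := by
      rw [Finset.sum_const, Finset.card_range]
      ring
    linarith
  have hstep : ξ (n+1) ≤ K^2 * ξ (4*n+4) := by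
    have a := hΔ (n+1) (by omega)
    have b := hΔ (2*n+2) (by omega)
    have e1 : 2 * (n+1) = 2*n+2 := by ring
    have e2 : 2 * (2*n+2) = 4*n+4 := by ring
    rw [e1] at a; rw [e2] at b
    calc ξ (n+1) ≤ K * ξ (2*n+2) := a
      _ ≤ K * (K * ξ (4*n+4)) := mul_le_mul_of_nonneg_left b hK0
      _ = K^2 * ξ (4*n+4) := by ring
  have key : T1 ≤ (1 + K^2/2) * T2 := by
    have h4 : (n:ℝ) * ξ (n+1) ≤ (n:ℝ) * (K^2 * ξ (4*n+4)) :=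
      mul_le_mul_of_nonneg_left hstep (le_of_lt hn0)
    have h5 : (n:ℝ) * (K^2 * ξ (4*n+4)) ≤ (K^2/2) * T2 := by
      have := mul_le_mul_of_nonneg_left hlow (by positivity : (0:ℝ) ≤ K^2/2)
      nlinarith
    nlinarith [hmid]
  rw [ha1, ha2]
  have hrhs : (2 + K^2) * (1/(2*(n:ℝ)) * T2) = (1/(n:ℝ)) * ((1 + K^2/2) * T2) := by
    rw [show (1:ℝ)/(2*(n:ℝ)) = (1/(n:ℝ))*(1/2) by field_simp]
    ring
  rw [hrhs]
  exact mul_le_mul_of_nonneg_left key (by positivity)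
end

section
/- Let ξ be a nonincreasing summable sequence of positive reals with ξ_{a∞} ≤ M ξ for some M > 0. Then there exist constants C > 0 and p > 1 such that ξ_n ≤ C (m/n)^p ξ_m for all integers n ≥ m ≥ 1. (One may take p = 1 + 1/M.) -/
open scoped BigOperators
open Filter

set_option maxHeartbeats 1000000 in
theorem stmt_8 (ξ : ℕ → ℝ)
    (hmono : ∀ n, 1 ≤ n → ξ (n + 1) ≤ ξ n)
    (hpos : ∀ n, 1 ≤ n → 0 < ξ n)
    (hsum : Summable ξ)
    (M : ℝ) (hM : 0 < M) (h : ∀ n, 1 ≤ n → ainf ξ n ≤ M * ξ n) :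
    ∃ C : ℝ, 0 < C ∧ ∃ p : ℝ, 1 < p ∧
      ∀ m n : ℕ, 1 ≤ m → m ≤ n → ξ n ≤ C * ((m : ℝ) / n) ^ p * ξ m := by
  -- extended monotonicity
  have hmono' : ∀ a b : ℕ, 1 ≤ a → a ≤ b → ξ b ≤ ξ a := by
    intro a b ha hab
    induction b, hab using Nat.le_induction with
    | base => exact le_refl _
    | succ n hn ih => exact (hmono n (le_trans ha hn)).trans ih
  -- tail sums
  set R : ℕ → ℝ := fun n => ∑' k : ℕ, ξ (n + 1 + k) with hRdef
  have hsummbl : ∀ n : ℕ, Summable (fun k => ξ (n + 1 + k)) := by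
    intro n
    exact hsum.comp_injective (fun a b hab => by omega)
  have hRpos : ∀ n, 0 < R n := by
    intro n
    exact Summable.tsum_pos (hsummbl n) (fun k => (hpos _ (by omega)).le) 0 (hpos _ (by omega))
  have hRrec : ∀ n : ℕ, R n = ξ (n + 1) + R (n + 1) := by
    intro n
    have e := Summable.tsum_eq_zero_add (hsummbl n)
    calc R n = ξ (n+1+0) + ∑' k : ℕ, ξ (n+1+(k+1)) := e
      _ = ξ (n + 1) + R (n + 1) := by
          congr 1
          exact tsum_congr fun k => congrArg ξ (by omega)
  have hξR : ∀ n, 1 ≤ n → R n ≤ M * n * ξ n := by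
    intro n hn
    have hn' : (0:ℝ) < n := by exact_mod_cast hn
    have := h n hn
    unfold ainf at this
    rw [one_div, inv_mul_le_iff₀ hn'] at this
    calc R n ≤ (n:ℝ) * (M * ξ n) := this
      _ = M * n * ξ n := by ring
  -- the recursion step
  have hRstep : ∀ n : ℕ, 1 ≤ n → R (n + 1) * (1 + 1 / (M * (n + 1))) ≤ R n := by
    intro n hn
    have h1 := hξR (n + 1) (by omega)
    have hMn : (0:ℝ) < M * ((n:ℝ) + 1) := by positivity
    have h2 : R (n + 1) / (M * ((n:ℝ) + 1)) ≤ ξ (n + 1) := by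
      rw [div_le_iff₀ hMn]
      calc R (n+1) ≤ M * ((n:ℕ)+1 : ℕ) * ξ (n+1) := h1
        _ = ξ (n+1) * (M * ((n:ℝ)+1)) := by push_cast; ring
    have h3 := hRrec n
    have : R (n+1) * (1 + 1/(M * ((n:ℝ)+1))) = R (n+1) + R (n+1) / (M * ((n:ℝ)+1)) := by
      field_simp
    rw [this]
    linarith
  -- the exponent
  set θ : ℝ := min 1 (1 / (2 * M)) with hθdef
  have hθpos : 0 < θ := lt_min one_pos (by positivity)
  have hθ1 : θ ≤ 1 := min_le_left _ _
  have hθM : θ ≤ 1 / (2 * M) := min_le_right _ _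
  -- decay of R
  have hdecay : ∀ m : ℕ, 1 ≤ m → ∀ n : ℕ, m ≤ n → R n * (n:ℝ) ^ θ ≤ R m * (m:ℝ) ^ θ := by
    intro m hm n hmn
    induction n, hmn using Nat.le_induction with
    | base => exact le_refl _
    | succ n hn ih =>
      refine le_trans ?_ ih
      have hn1 : 1 ≤ n := le_trans hm hn
      have hn' : (0:ℝ) < n := by exact_mod_cast hn1
      have key : ((n:ℝ) + 1) ^ θ ≤ (n:ℝ) ^ θ * (1 + 1 / (M * ((n:ℝ) + 1))) := by
        have e1 : ((n:ℝ) + 1) ^ θ = (n:ℝ) ^ θ * (1 + 1 / (n:ℝ)) ^ θ := by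
          rw [← Real.mul_rpow hn'.le (by positivity)]
          congr 1
          field_simp
        rw [e1]
        refine mul_le_mul_of_nonneg_left ?_ (Real.rpow_nonneg hn'.le _)
        have hs : (-1:ℝ) ≤ 1 / (n:ℝ) := by
          have : (0:ℝ) ≤ 1 / (n:ℝ) := by positivity
          linarith
        have hb := rpow_one_add_le_one_add_mul_self
          (s := 1 / (n:ℝ)) hs hθpos.le hθ1
        refine hb.trans ?_
        have key2 : θ * (1 / (n:ℝ)) ≤ 1 / (M * ((n:ℝ) + 1)) := by
          rw [mul_one_div, div_le_div_iff₀ hn' (by positivity)]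
          have h1 : θ * (M * ((n:ℝ)+1)) ≤ (1/(2*M)) * (M * ((n:ℝ)+1)) :=
            mul_le_mul_of_nonneg_right hθM (by positivity)
          have h2 : (1/(2*M)) * (M * ((n:ℝ)+1)) = ((n:ℝ)+1)/2 := by field_simp
          have hn1' : (1:ℝ) ≤ (n:ℝ) := by exact_mod_cast hn1
          nlinarith
        linarith
      have hstep := hRstep n hn1
      calc R (n+1) * ((n:ℕ)+1 : ℕ) ^ θ
          = R (n+1) * (((n:ℝ)+1)) ^ θ := by push_cast; ring_nf
        _ ≤ R (n+1) * ((n:ℝ) ^ θ * (1 + 1/(M * ((n:ℝ)+1)))) :=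
            mul_le_mul_of_nonneg_left key (hRpos _).le
        _ = (R (n+1) * (1 + 1/(M * ((n:ℝ)+1)))) * (n:ℝ) ^ θ := by ring
        _ ≤ R n * (n:ℝ) ^ θ := by
            apply mul_le_mul_of_nonneg_right ?_ (Real.rpow_nonneg hn'.le _)
            exact_mod_cast hstep
  -- partial sums vs tails
  have hsumR : ∀ k n : ℕ, k ≤ n → (∑ j ∈ Finset.Icc (k+1) n, ξ j) + R n = R k := by
    intro k n hkn
    induction n, hkn using Nat.le_induction with
    | base => simp
    | succ n hn ih =>
      rw [Finset.sum_Icc_succ_top (by omega)]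
      rw [show (∑ j ∈ Finset.Icc (k+1) n, ξ j) + ξ (n+1) + R (n+1)
            = (∑ j ∈ Finset.Icc (k+1) n, ξ j) + (ξ (n+1) + R (n+1)) by ring,
          ← hRrec n]
      exact ih
  -- final constants
  set p : ℝ := 1 + θ with hpdef
  refine ⟨(2:ℝ) ^ p + 2 * M * (4:ℝ) ^ θ, by positivity, p, by simp [hpdef]; linarith, ?_⟩
  intro m n hm hmn
  have hm' : (0:ℝ) < m := by exact_mod_cast hm
  have hn1 : 1 ≤ n := le_trans hm hmn
  have hn' : (0:ℝ) < n := by exact_mod_cast hn1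
  have hq : (0:ℝ) < (m:ℝ)/n := by positivity
  have hqp : (0:ℝ) < ((m:ℝ)/n) ^ p := Real.rpow_pos_of_pos hq _
  have hppos : (0:ℝ) < p := by simp [hpdef]; linarith
  have hC2 : (0:ℝ) ≤ 2 * M * (4:ℝ) ^ θ := by positivity
  have hC1 : (0:ℝ) ≤ (2:ℝ) ^ p := by positivity
  by_cases hcase : n < 2 * m
  · -- near case
    have h1 : ξ n ≤ ξ m := hmono' m n hm hmn
    have h2 : (1/2 : ℝ) ≤ (m:ℝ)/n := by
      rw [div_le_div_iff₀ (by norm_num) hn']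
      have : (n:ℝ) ≤ 2 * m := by exact_mod_cast Nat.le_of_lt_succ (by omega)
      linarith
    have h3 : (1/2:ℝ) ^ p ≤ ((m:ℝ)/n) ^ p :=
      Real.rpow_le_rpow (by norm_num) h2 hppos.le
    have key : (1:ℝ) ≤ (2:ℝ) ^ p * ((m:ℝ)/n) ^ p := by
      have e : (2:ℝ) ^ p * (1/2:ℝ) ^ p = 1 := by
        rw [← Real.mul_rpow (by norm_num) (by norm_num)]
        norm_num
      calc (1:ℝ) = (2:ℝ) ^ p * (1/2:ℝ) ^ p := e.symm
        _ ≤ (2:ℝ) ^ p * ((m:ℝ)/n) ^ p := mul_le_mul_of_nonneg_left h3 hC1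
    have hξm := hpos m hm
    calc ξ n ≤ ξ m := h1
      _ = 1 * ξ m := by ring
      _ ≤ ((2:ℝ) ^ p * ((m:ℝ)/n) ^ p) * ξ m :=
          mul_le_mul_of_nonneg_right key hξm.le
      _ ≤ (((2:ℝ) ^ p + 2 * M * (4:ℝ) ^ θ) * ((m:ℝ)/n) ^ p) * ξ m := by
          apply mul_le_mul_of_nonneg_right ?_ hξm.le
          apply mul_le_mul_of_nonneg_right ?_ hqp.le
          linarith
  · -- far case
    push_neg at hcase
    set k := n / 2 with hkdef
    have hmk : m ≤ k := by omega
    have hk1 : 1 ≤ k := le_trans hm hmk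
    have hkn : k + 1 ≤ n := by omega
    have h2k : 2 * k ≤ n := by omega
    have hn4k : n ≤ 4 * k := by omega
    have hk' : (0:ℝ) < k := by exact_mod_cast hk1
    have hnk' : (0:ℝ) < (n:ℝ) - k := by
      have : (k:ℝ) < n := by exact_mod_cast (by omega : k < n)
      linarith
    have hcast2k : 2 * (k:ℝ) ≤ n := by exact_mod_cast h2k
    have hcast4k : (n:ℝ) ≤ 4 * k := by exact_mod_cast hn4k
    -- (n-k) ξ n ≤ R k
    have hsum1 : ((n:ℝ) - k) * ξ n ≤ R k := by
      have hcard : ∑ _j ∈ Finset.Icc (k+1) n, ξ n = ((n:ℝ) - k) * ξ n := by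
        rw [Finset.sum_const, Nat.card_Icc, nsmul_eq_mul]
        congr 1
        have e : n + 1 - (k+1) = n - k := by omega
        rw [e, Nat.cast_sub (by omega)]
      have hlb : ((n:ℝ) - k) * ξ n ≤ ∑ j ∈ Finset.Icc (k+1) n, ξ j := by
        rw [← hcard]
        exact Finset.sum_le_sum fun j hj => by
          simp only [Finset.mem_Icc] at hj
          exact hmono' j n (by omega) hj.2
      have := hsumR k n (by omega)
      linarith [hRpos n]
    -- R k ≤ R m * (m/k)^θ
    have hRk : R k ≤ R m * ((m:ℝ)/k) ^ θ := by
      have hd := hdecay m hm k hmk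
      have hkθ : (0:ℝ) < (k:ℝ) ^ θ := Real.rpow_pos_of_pos hk' _
      have e : R m * ((m:ℝ)^θ/(k:ℝ)^θ) = (R m * (m:ℝ)^θ)/(k:ℝ)^θ := by ring
      rw [Real.div_rpow hm'.le hk'.le, e, le_div_iff₀ hkθ]
      exact hd
    have hRm : R m ≤ M * m * ξ m := hξR m hm
    have hξn : ξ n ≤ (M * m * ξ m * ((m:ℝ)/k) ^ θ) / ((n:ℝ) - k) := by
      rw [le_div_iff₀ hnk']
      have hmk' : (0:ℝ) ≤ ((m:ℝ)/k) ^ θ := Real.rpow_nonneg (by positivity) _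
      calc ξ n * ((n:ℝ) - k) = ((n:ℝ) - k) * ξ n := by ring
        _ ≤ R k := hsum1
        _ ≤ R m * ((m:ℝ)/k) ^ θ := hRk
        _ ≤ (M * m * ξ m) * ((m:ℝ)/k) ^ θ := mul_le_mul_of_nonneg_right hRm hmk'
    -- now the numeric juggling
    have hξm := hpos m hm
    have hb1 : (m:ℝ) / ((n:ℝ) - k) ≤ 2 * ((m:ℝ)/n) := by
      rw [div_le_iff₀ hnk']
      have : 2 * ((m:ℝ)/n) * ((n:ℝ) - k) = 2 * m * (((n:ℝ) - k)/n) := by ring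
      rw [this]
      have h4 : (1/2 : ℝ) ≤ ((n:ℝ) - k)/n := by
        rw [div_le_div_iff₀ (by norm_num) hn']
        linarith
      nlinarith
    have hb2 : ((m:ℝ)/k) ^ θ ≤ (4:ℝ) ^ θ * ((m:ℝ)/n) ^ θ := by
      rw [← Real.mul_rpow (by norm_num) hq.le]
      apply Real.rpow_le_rpow (by positivity) ?_ hθpos.le
      have e4 : (4:ℝ) * ((m:ℝ)/n) = (4*(m:ℝ))/n := by ring
      rw [e4, div_le_div_iff₀ hk' hn']
      nlinarith
    have hrpadd : ((m:ℝ)/n) ^ p = ((m:ℝ)/n) * ((m:ℝ)/n) ^ θ := by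
      rw [hpdef, Real.rpow_add hq, Real.rpow_one]
    have hqθ : (0:ℝ) ≤ ((m:ℝ)/n) ^ θ := Real.rpow_nonneg hq.le _
    calc ξ n ≤ (M * m * ξ m * ((m:ℝ)/k) ^ θ) / ((n:ℝ) - k) := hξn
      _ = M * ξ m * ((m:ℝ)/((n:ℝ) - k)) * ((m:ℝ)/k) ^ θ := by
          rw [div_eq_mul_inv, div_eq_mul_inv ((m:ℝ)) (((n:ℝ) - k))]; ring
      _ ≤ M * ξ m * (2 * ((m:ℝ)/n)) * ((4:ℝ) ^ θ * ((m:ℝ)/n) ^ θ) := by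
          apply mul_le_mul ?_ hb2 (Real.rpow_nonneg (by positivity) _) (by positivity)
          exact mul_le_mul_of_nonneg_left hb1 (by positivity)
      _ = (2 * M * (4:ℝ) ^ θ) * (((m:ℝ)/n) * ((m:ℝ)/n) ^ θ) * ξ m := by ring
      _ = (2 * M * (4:ℝ) ^ θ) * ((m:ℝ)/n) ^ p * ξ m := by rw [hrpadd]
      _ ≤ (((2:ℝ) ^ p + 2 * M * (4:ℝ) ^ θ) * ((m:ℝ)/n) ^ p) * ξ m := by
          apply mul_le_mul_of_nonneg_right ?_ hξm.le
          apply mul_le_mul_of_nonneg_right ?_ hqp.le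
          linarith
end

section
/- Let ξ be a nonincreasing summable sequence of nonnegative reals. If there exist C > 0 and p > 1 such that ξ_n ≤ C (m/n)^p ξ_m for all n ≥ m ≥ 1, then (ξ_{a∞})_n ≤ (C/(p-1)) ξ_n for all n, i.e., ξ_{a∞} = O(ξ). -/
open scoped BigOperators
open Filter

private lemma sum_rpow_tail_le (n : ℕ) (hn : 1 ≤ n) {p : ℝ} (hp : 1 < p) (N : ℕ) :
    ∑ i ∈ Finset.range N, ((n : ℝ) + 1 + i) ^ (-p) ≤ (n : ℝ) ^ (1 - p) / (p - 1) := by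
  have hn0 : (0 : ℝ) < n := by exact_mod_cast hn
  have hanti : AntitoneOn (fun x : ℝ => x ^ (-p)) (Set.Icc (n : ℝ) ((n : ℝ) + N)) := by
    intro x hx y hy hxy
    have hx0 : 0 < x := lt_of_lt_of_le hn0 hx.1
    have hy0 : 0 < y := lt_of_lt_of_le hn0 hy.1
    simp only [Real.rpow_neg hx0.le, Real.rpow_neg hy0.le]
    exact inv_anti₀ (Real.rpow_pos_of_pos hx0 p)
      (Real.rpow_le_rpow hx0.le hxy (by linarith))
  have hsumint := hanti.sum_le_integral (x₀ := (n : ℝ)) (a := N)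
  have hval : ∫ x in (n : ℝ)..((n : ℝ) + N), x ^ (-p)
      = (((n : ℝ) + N) ^ (-p + 1) - (n : ℝ) ^ (-p + 1)) / (-p + 1) := by
    apply integral_rpow
    right
    constructor
    · intro hc; linarith
    · rw [Set.mem_uIcc]
      push_neg
      constructor
      · intro h0; linarith
      · intro h0; linarith [Nat.cast_nonneg (α := ℝ) N]
  have h1 : (((n : ℝ) + N) ^ (-p + 1) - (n : ℝ) ^ (-p + 1)) / (-p + 1)
      ≤ (n : ℝ) ^ (1 - p) / (p - 1) := by
    have he : (-p + 1 : ℝ) = 1 - p := by ring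
    rw [he]
    have hN0 : (0 : ℝ) ≤ ((n : ℝ) + N) ^ (1 - p) :=
      Real.rpow_nonneg (by positivity) _
    have key : (((n : ℝ) + N) ^ (1 - p) - (n : ℝ) ^ (1 - p)) / (1 - p)
        = ((n : ℝ) ^ (1 - p) - ((n : ℝ) + N) ^ (1 - p)) / (p - 1) := by
      rw [show (1 - p : ℝ) = -(p - 1) by ring, div_neg]; ring
    rw [key]
    gcongr
    · linarith
  calc ∑ i ∈ Finset.range N, ((n : ℝ) + 1 + i) ^ (-p)
      = ∑ i ∈ Finset.range N, ((n : ℝ) + (i + 1 : ℕ)) ^ (-p) := by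
        apply Finset.sum_congr rfl; intro i _; push_cast; ring_nf
    _ ≤ ∫ x in (n : ℝ)..((n : ℝ) + N), x ^ (-p) := hsumint
    _ ≤ (n : ℝ) ^ (1 - p) / (p - 1) := by rw [hval]; exact h1

theorem stmt_9 (ξ : ℕ → ℝ)
    (hmono : ∀ n, 1 ≤ n → ξ (n + 1) ≤ ξ n)
    (hnn : ∀ n, 1 ≤ n → 0 ≤ ξ n)
    (hsum : Summable ξ)
    (C p : ℝ) (hC : 0 < C) (hp : 1 < p)
    (h : ∀ m n : ℕ, 1 ≤ m → m ≤ n → ξ n ≤ C * ((m : ℝ) / n) ^ p * ξ m) :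
    ∀ n, 1 ≤ n → ainf ξ n ≤ (C / (p - 1)) * ξ n := by
  intro n hn
  have hn0 : (0 : ℝ) < n := by exact_mod_cast hn
  have hξn : 0 ≤ ξ n := hnn n hn
  -- bound the tail tsum
  have hterm : ∀ k : ℕ, ξ (n + 1 + k) ≤ C * ξ n * (n : ℝ) ^ p * ((n : ℝ) + 1 + k) ^ (-p) := by
    intro k
    have hb := h n (n + 1 + k) hn (by omega)
    have hcast : ((n + 1 + k : ℕ) : ℝ) = (n : ℝ) + 1 + k := by push_cast; ring
    rw [hcast] at hb
    have hd : (0 : ℝ) < (n : ℝ) + 1 + k := by positivity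
    calc ξ (n + 1 + k) ≤ C * ((n : ℝ) / ((n : ℝ) + 1 + k)) ^ p * ξ n := hb
      _ = C * ξ n * (n : ℝ) ^ p * ((n : ℝ) + 1 + k) ^ (-p) := by
          rw [Real.div_rpow hn0.le hd.le, Real.rpow_neg hd.le]
          ring
  have htsum : ∑' k : ℕ, ξ (n + 1 + k) ≤ C * ξ n * (n : ℝ) / (p - 1) := by
    apply Real.tsum_le_of_sum_range_le
    · intro k; exact hnn _ (by omega)
    · intro N
      calc ∑ i ∈ Finset.range N, ξ (n + 1 + i)
          ≤ ∑ i ∈ Finset.range N, C * ξ n * (n : ℝ) ^ p * ((n : ℝ) + 1 + i) ^ (-p) :=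
            Finset.sum_le_sum fun i _ => hterm i
        _ = C * ξ n * (n : ℝ) ^ p * ∑ i ∈ Finset.range N, ((n : ℝ) + 1 + i) ^ (-p) := by
            rw [Finset.mul_sum]
        _ ≤ C * ξ n * (n : ℝ) ^ p * ((n : ℝ) ^ (1 - p) / (p - 1)) := by
            apply mul_le_mul_of_nonneg_left (sum_rpow_tail_le n hn hp N)
            positivity
        _ = C * ξ n * ((n : ℝ) ^ p * (n : ℝ) ^ (1 - p)) / (p - 1) := by ring
        _ = C * ξ n * (n : ℝ) / (p - 1) := by
            rw [← Real.rpow_add hn0]; norm_num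
  unfold ainf
  calc (1 / (n : ℝ)) * ∑' k : ℕ, ξ (n + 1 + k)
      ≤ (1 / (n : ℝ)) * (C * ξ n * (n : ℝ) / (p - 1)) :=
        mul_le_mul_of_nonneg_left htsum (by positivity)
    _ = (C / (p - 1)) * ξ n := by field_simp
end

section
/- Let ξ be a nonincreasing summable sequence of nonnegative reals. If ξ_{a∞} ≤ M ξ for some M > 0, then the second arithmetic mean at infinity satisfies (ξ_{a∞})_{a∞} ≤ M ξ_{a∞}; that is, the condition 'η_{a∞} = O(η)' is inherited by η = ξ_{a∞}. -/
open scoped BigOperators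
open Filter

theorem stmt_10 (ξ : ℕ → ℝ)
    (hmono : ∀ n, 1 ≤ n → ξ (n + 1) ≤ ξ n)
    (hnn : ∀ n, 1 ≤ n → 0 ≤ ξ n)
    (hsum : Summable ξ)
    (M : ℝ) (hM : 0 < M) (h : ∀ n, 1 ≤ n → ainf ξ n ≤ M * ξ n) :
    ∀ n, 1 ≤ n → ainf (ainf ξ) n ≤ M * ainf ξ n := by
  intro n hn
  have hshift : ∀ m : ℕ, Summable (fun k : ℕ => ξ (m + 1 + k)) := by
    intro m
    have := (summable_nat_add_iff (m + 1)).mpr hsum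
    simpa [add_comm] using this
  have hainn : ∀ m : ℕ, 1 ≤ m → 0 ≤ ainf ξ m := by
    intro m hm
    apply mul_nonneg (by positivity)
    exact tsum_nonneg fun k => hnn _ (by omega)
  have hsum2 : Summable (fun k : ℕ => ainf ξ (n + 1 + k)) := by
    apply Summable.of_nonneg_of_le (fun k => hainn _ (by omega))
      (fun k => h _ (by omega)) ((hshift n).mul_left M)
  have hle : (∑' k : ℕ, ainf ξ (n + 1 + k)) ≤ ∑' k : ℕ, M * ξ (n + 1 + k) :=
    Summable.tsum_le_tsum (fun k => h _ (by omega)) hsum2 ((hshift n).mul_left M)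
  have : ainf (ainf ξ) n ≤ (1 / (n : ℝ)) * ∑' k : ℕ, M * ξ (n + 1 + k) := by
    unfold ainf
    exact mul_le_mul_of_nonneg_left hle (by positivity)
  calc ainf (ainf ξ) n ≤ (1 / (n : ℝ)) * ∑' k : ℕ, M * ξ (n + 1 + k) := this
    _ = M * ainf ξ n := by rw [tsum_mul_left]; unfold ainf; ring
end

section
/- Let ξ be a nonincreasing summable sequence of positive reals and suppose there exist M > 0 and an integer k > 1 with (ξ_{a∞})_{kn} ≤ M ξ_n for all n. Then (ξ_{a∞})_j ≤ (k - 1 + kM) (D_k ξ)_j for all j, where D_k ξ is the k-fold ampliation; in particular ξ_{a∞} = O(D_k ξ). -/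
open scoped BigOperators
open Filter

theorem stmt_12 (ξ : ℕ → ℝ)
    (hmono : ∀ n, 1 ≤ n → ξ (n + 1) ≤ ξ n)
    (hpos : ∀ n, 1 ≤ n → 0 < ξ n)
    (hsum : Summable ξ)
    (M : ℝ) (hM : 0 < M) (k : ℕ) (hk : 1 < k)
    (h : ∀ n, 1 ≤ n → ainf ξ (k * n) ≤ M * ξ n) :
    ∀ j, 1 ≤ j → ainf ξ j ≤ ((k : ℝ) - 1 + k * M) * ampl k ξ j := by
  intro j hj
  have hk0 : 0 < k := by omega
  set n := (j + k - 1) / k with hn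
  -- basic arithmetic facts about n and K := k * n
  have hn_eq : n = (j - 1) / k + 1 := by
    rw [hn, show j + k - 1 = (j - 1) + k by omega, Nat.add_div_right _ hk0]
  have hn1 : 1 ≤ n := by rw [hn_eq]; exact Nat.le_add_left 1 _
  have hnj : n ≤ j := by
    obtain ⟨q, hq⟩ : ∃ q, q = (j - 1) / k := ⟨_, rfl⟩
    have h1 : q ≤ j - 1 := hq ▸ Nat.div_le_self _ _
    omega
  obtain ⟨K, hK⟩ : ∃ K, K = k * n := ⟨_, rfl⟩
  have hjK : j ≤ K := by
    have hmod := Nat.div_add_mod (j - 1) k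
    have hlt : (j - 1) % k < k := Nat.mod_lt _ hk0
    have : K = k * ((j - 1) / k) + k := by rw [hK, hn_eq, Nat.mul_add, Nat.mul_one]
    obtain ⟨A, hA⟩ : ∃ A, A = k * ((j - 1) / k) := ⟨_, rfl⟩
    rw [← hA] at hmod this
    omega
  have hKle : K ≤ j + k - 1 := by
    have hmod := Nat.div_add_mod (j - 1) k
    have : K = k * ((j - 1) / k) + k := by rw [hK, hn_eq, Nat.mul_add, Nat.mul_one]
    obtain ⟨A, hA⟩ : ∃ A, A = k * ((j - 1) / k) := ⟨_, rfl⟩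
    rw [← hA] at hmod this
    omega
  -- monotonicity in general form
  have mono : ∀ a b : ℕ, 1 ≤ a → a ≤ b → ξ b ≤ ξ a := by
    intro a b ha hab
    induction hab with
    | refl => exact le_rfl
    | step h' ih =>
      rename_i m
      exact le_trans (hmono m (le_trans ha h')) ih
  -- summability of tails
  have hS : ∀ m : ℕ, Summable (fun i => ξ (m + 1 + i)) := by
    intro m
    have := (summable_nat_add_iff (m + 1)).2 hsum
    simpa [add_comm] using this
  -- split the tail sum at K
  set d := K - j with hd
  have hsplit : (∑' i, ξ (j + 1 + i))
      = (∑ i ∈ Finset.range d, ξ (j + 1 + i)) + ∑' i, ξ (K + 1 + i) := by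
    have h0 := (Summable.sum_add_tsum_nat_add d (hS j)).symm
    rw [h0]
    congr 1
    apply tsum_congr
    intro i
    congr 1
    omega
  -- bound on the finite part
  have hxi : 0 < ξ n := hpos n hn1
  have hsum_le : (∑ i ∈ Finset.range d, ξ (j + 1 + i)) ≤ (d : ℝ) * ξ n := by
    have hbd : ∀ i ∈ Finset.range d, ξ (j + 1 + i) ≤ ξ n := by
      intro i _
      exact mono n (j + 1 + i) hn1 (by omega)
    calc (∑ i ∈ Finset.range d, ξ (j + 1 + i)) ≤ (Finset.range d).card • ξ n :=
          Finset.sum_le_card_nsmul _ _ _ hbd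
      _ = (d : ℝ) * ξ n := by simp [nsmul_eq_mul]
  -- bound on the tail part using the hypothesis
  have hK1 : 1 ≤ K := le_trans hj hjK
  have hKr : (0 : ℝ) < (K : ℝ) := by exact_mod_cast hK1
  have hainf := h n hn1
  rw [← hK] at hainf
  have htail : (∑' i, ξ (K + 1 + i)) ≤ (K : ℝ) * (M * ξ n) := by
    rw [ainf] at hainf
    have h2 := mul_le_mul_of_nonneg_left hainf (le_of_lt hKr)
    calc (∑' i, ξ (K + 1 + i)) = (K : ℝ) * ((1 / (K : ℝ)) * ∑' i, ξ (K + 1 + i)) := by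
          field_simp
      _ ≤ (K : ℝ) * (M * ξ n) := h2
  -- combine
  have hT : (∑' i, ξ (j + 1 + i)) ≤ (d : ℝ) * ξ n + (K : ℝ) * (M * ξ n) := by
    rw [hsplit]; exact add_le_add hsum_le htail
  have hjr : (1 : ℝ) ≤ (j : ℝ) := by exact_mod_cast hj
  have hkr : (2 : ℝ) ≤ (k : ℝ) := by exact_mod_cast hk
  have hdr : (d : ℝ) ≤ (k : ℝ) - 1 := by
    have : d + 1 ≤ k := by omega
    have := (Nat.cast_le (α := ℝ)).2 this
    push_cast at this
    linarith
  have hd2 : (d : ℝ) ≤ ((k : ℝ) - 1) * (j : ℝ) := by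
    have := le_mul_of_one_le_right (show (0 : ℝ) ≤ (k : ℝ) - 1 by linarith) hjr
    linarith
  have hK2 : (K : ℝ) ≤ (k : ℝ) * (j : ℝ) := by
    have h1 : K + 1 ≤ j + k := by omega
    have h1' := (Nat.cast_le (α := ℝ)).2 h1
    push_cast at h1'
    nlinarith [mul_nonneg (show (0 : ℝ) ≤ (k : ℝ) - 1 by linarith)
      (show (0 : ℝ) ≤ (j : ℝ) - 1 by linarith)]
  have hjne : (j : ℝ) ≠ 0 := by positivity
  have hampl : ampl k ξ j = ξ n := rfl
  rw [ainf, hampl]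
  calc (1 / (j : ℝ)) * ∑' i, ξ (j + 1 + i)
      ≤ (1 / (j : ℝ)) * (((k : ℝ) - 1) * (j : ℝ) * ξ n + (k : ℝ) * (j : ℝ) * (M * ξ n)) := by
        apply mul_le_mul_of_nonneg_left _ (by positivity)
        calc (∑' i, ξ (j + 1 + i)) ≤ (d : ℝ) * ξ n + (K : ℝ) * (M * ξ n) := hT
          _ ≤ ((k : ℝ) - 1) * (j : ℝ) * ξ n + (k : ℝ) * (j : ℝ) * (M * ξ n) := by
            gcongr
    _ = ((k : ℝ) - 1 + k * M) * ξ n := by field_simp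
end

section
/- Let ξ be a nonincreasing summable sequence of positive reals such that for some integer k > 1, inf_n (ξ_{a∞})_n / (ξ_{a∞})_{kn} > k for that k (and hence, iterating, the suprema over powers of k of inf_n (ξ_{a∞})_n/(k^m (ξ_{a∞})_{k^m n}) are unbounded). Then sup_k inf_n (ξ_{a∞})_n / (k (ξ_{a∞})_{kn}) = ∞. -/
open scoped BigOperators
open Filter

lemma ainf_pos' (ξ : ℕ → ℝ) (hpos : ∀ n, 1 ≤ n → 0 < ξ n) (hsum : Summable ξ)
    (n : ℕ) (hn : 1 ≤ n) : 0 < ainf ξ n := by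
  have hs : Summable (fun j : ℕ => ξ (n + 1 + j)) := by
    have := (summable_nat_add_iff (n + 1)).mpr hsum
    simpa [add_comm] using this
  have ht : 0 < ∑' j : ℕ, ξ (n + 1 + j) := by
    refine Summable.tsum_pos hs (fun j => (hpos _ (by omega)).le) 0 (hpos _ (by omega))
  have hn' : (0 : ℝ) < n := by exact_mod_cast hn
  exact mul_pos (by positivity) ht

theorem stmt_14 (ξ : ℕ → ℝ)
    (hmono : ∀ n, 1 ≤ n → ξ (n + 1) ≤ ξ n)
    (hpos : ∀ n, 1 ≤ n → 0 < ξ n)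
    (hsum : Summable ξ)
    (k : ℕ) (hk : 1 < k) (c : ℝ) (hc : (k : ℝ) < c)
    (h : ∀ n, 1 ≤ n → c ≤ ainf ξ n / ainf ξ (k * n)) :
    ∀ B : ℝ, ∃ K : ℕ, 1 ≤ K ∧ ∀ n, 1 ≤ n →
      B ≤ ainf ξ n / ((K : ℝ) * ainf ξ (K * n)) := by
  have hapos := ainf_pos' ξ hpos hsum
  have hc0 : (0 : ℝ) < c := lt_of_le_of_lt (by positivity) hc
  have hkR : (0 : ℝ) < (k : ℝ) := by exact_mod_cast (by omega : 0 < k)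
  -- iterate the ratio bound
  have key : ∀ m : ℕ, ∀ n : ℕ, 1 ≤ n → c ^ m ≤ ainf ξ n / ainf ξ (k ^ m * n) := by
    intro m
    induction m with
    | zero => intro n hn; simp [le_div_iff₀ (hapos n hn)]
    | succ m ih =>
      intro n hn
      have hkmn : 1 ≤ k ^ m * n := Nat.one_le_iff_ne_zero.mpr (by positivity)
      have h1 := ih n hn
      have h2 := h (k ^ m * n) hkmn
      have e : k ^ (m + 1) * n = k * (k ^ m * n) := by ring
      rw [e, pow_succ]
      calc c ^ m * c ≤ (ainf ξ n / ainf ξ (k ^ m * n)) * (ainf ξ (k ^ m * n) / ainf ξ (k * (k ^ m * n))) := by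
            apply mul_le_mul h1 h2 hc0.le
            exact le_trans (by positivity) h1
        _ = ainf ξ n / ainf ξ (k * (k ^ m * n)) := by
            have hb := hapos _ hkmn
            field_simp
  intro B
  obtain ⟨m, hm⟩ := pow_unbounded_of_one_lt B (show (1:ℝ) < c / (k:ℝ) from (one_lt_div hkR).mpr hc)
  refine ⟨k ^ m, Nat.one_le_iff_ne_zero.mpr (by positivity), fun n hn => ?_⟩
  have h1 := key m n hn
  have hkm : (0:ℝ) < ((k ^ m : ℕ) : ℝ) := by positivity
  have hd := hapos (k ^ m * n) (Nat.one_le_iff_ne_zero.mpr (by positivity))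
  have : (c / (k:ℝ)) ^ m ≤ ainf ξ n / (((k ^ m : ℕ):ℝ) * ainf ξ (k ^ m * n)) := by
    rw [div_pow, le_div_iff₀ (by positivity)]
    rw [le_div_iff₀ (by positivity)] at h1
    push_cast
    have he : c ^ m / (k:ℝ) ^ m * ((k:ℝ) ^ m * ainf ξ (k ^ m * n))
        = c ^ m * ainf ξ (k ^ m * n) := by
      field_simp
    linarith
  linarith
end

section
/- Let ξ be a nonincreasing sequence of positive reals tending to 0 with ξ_a ≤ M ξ for some M > 1, where (ξ_a)_n = (1/n)∑_{j≤n} ξ_j. Then ξ_n ≥ (1/(M 2^{1/M})) (m/n)^{1 - 1/M} ξ_m for all n ≥ m ≥ 1. -/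
open scoped BigOperators
open Filter

theorem stmt_15 (ξ : ℕ → ℝ)
    (hmono : ∀ n, 1 ≤ n → ξ (n + 1) ≤ ξ n)
    (hpos : ∀ n, 1 ≤ n → 0 < ξ n)
    (hlim : Tendsto ξ atTop (nhds 0))
    (M : ℝ) (hM : 1 < M) (h : ∀ n, 1 ≤ n → ces ξ n ≤ M * ξ n) :
    ∀ m n : ℕ, 1 ≤ m → m ≤ n →
      (1 / (M * (2 : ℝ) ^ (1 / M))) * ((m : ℝ) / n) ^ (1 - 1 / M) * ξ m ≤ ξ n := by
  intro m n hm hmn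
  have hM0 : (0:ℝ) < M := lt_trans one_pos hM
  set p : ℝ := 1 / M with hpdef
  have hp0 : 0 < p := by positivity
  have hp1 : p ≤ 1 := by rw [hpdef, div_le_one hM0]; exact hM.le
  have hpM : p * M = 1 := by rw [hpdef]; field_simp
  have hanti : ∀ a b : ℕ, 1 ≤ a → a ≤ b → ξ b ≤ ξ a := by
    intro a b ha hab
    induction b, hab using Nat.le_induction with
    | base => exact le_rfl
    | succ k hk ih => exact (hmono k (ha.trans hk)).trans ih
  set S : ℕ → ℝ := fun n => ∑ j ∈ Finset.Icc 1 n, ξ j with hSdef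
  have hSrec : ∀ k : ℕ, S (k+1) = S k + ξ (k+1) := by
    intro k
    simp only [hSdef]
    rw [Finset.sum_Icc_succ_top (by omega : 1 ≤ k + 1)]
  have hSpos : ∀ k : ℕ, 1 ≤ k → 0 < S k := by
    intro k hk
    apply Finset.sum_pos
    · intro j hj
      exact hpos j (Finset.mem_Icc.mp hj).1
    · exact ⟨1, Finset.mem_Icc.mpr ⟨le_rfl, hk⟩⟩
  have hSle : ∀ k : ℕ, 1 ≤ k → S k ≤ M * k * ξ k := by
    intro k hk
    have hk0 : (0:ℝ) < (k:ℝ) := by exact_mod_cast hk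
    have := h k hk
    rw [show ces ξ k = (1/(k:ℝ)) * S k from rfl] at this
    rw [one_div, inv_mul_le_iff₀ hk0] at this
    linarith [this]
  have hmS : (m:ℝ) * ξ m ≤ S m := by
    have : ∑ _j ∈ Finset.Icc 1 m, ξ m ≤ S m := by
      apply Finset.sum_le_sum
      intro j hj
      exact hanti j m (Finset.mem_Icc.mp hj).1 (Finset.mem_Icc.mp hj).2
    simpa [Nat.card_Icc, nsmul_eq_mul] using this
  have key : ∀ k, m ≤ k → S m * (((k:ℝ)+1)/((m:ℝ)+1)) ^ p ≤ S k := by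
    intro k hk
    induction k, hk using Nat.le_induction with
    | base =>
      have h1 : ((m:ℝ)+1)/((m:ℝ)+1) = 1 := div_self (by positivity)
      rw [h1, Real.one_rpow, mul_one]
    | succ k hk ih =>
      have hk1 : 1 ≤ k := hm.trans hk
      have hk0 : (0:ℝ) < (k:ℝ)+1 := by positivity
      have hk2 : (2:ℝ) ≤ (k:ℝ)+1 := by
        have : (1:ℝ) ≤ (k:ℝ) := by exact_mod_cast hk1
        linarith
      set x : ℝ := p / ((k:ℝ)+1) with hxdef
      have hx0 : 0 < x := by positivity
      have hx1 : x ≤ 1/2 := by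
        rw [hxdef, div_le_div_iff₀ hk0 (by norm_num)]
        nlinarith
      have hξk : 0 < ξ (k+1) := hpos (k+1) (by omega)
      have hSk1 : 0 < S (k+1) := hSpos (k+1) (by omega)
      have hxS : x * S (k+1) ≤ ξ (k+1) := by
        have h1 : S (k+1) ≤ M * (↑(k+1):ℝ) * ξ (k+1) := hSle (k+1) (by omega)
        push_cast at h1
        calc x * S (k+1) ≤ x * (M * ((k:ℝ)+1) * ξ (k+1)) := by
              exact mul_le_mul_of_nonneg_left h1 hx0.le
          _ = (p * M) * ξ (k+1) := by rw [hxdef]; field_simp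
          _ = ξ (k+1) := by rw [hpM, one_mul]
      have hstep : S k ≤ S (k+1) * (1 - x) := by
        have hr := hSrec k
        nlinarith
      have hmul : S k * (1 + x) ≤ S (k+1) := by nlinarith [sq_nonneg x]
      have hrpow : (((k:ℝ)+2)/((k:ℝ)+1)) ^ p ≤ 1 + x := by
        have hb : ((k:ℝ)+2)/((k:ℝ)+1) = 1 + 1/((k:ℝ)+1) := by field_simp; ring
        rw [hb]
        calc (1 + 1/((k:ℝ)+1)) ^ p ≤ 1 + p * (1/((k:ℝ)+1)) :=
              rpow_one_add_le_one_add_mul_self ((by positivity : (0:ℝ) ≤ 1/((k:ℝ)+1)).trans' (by norm_num)) hp0.le hp1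
          _ = 1 + x := by rw [hxdef]; ring
      have hSm : 0 < S m := hSpos m hm
      have hm0 : (0:ℝ) < (m:ℝ)+1 := by positivity
      have hbases : ((↑(k+1):ℝ)+1)/((m:ℝ)+1) = (((k:ℝ)+1)/((m:ℝ)+1)) * (((k:ℝ)+2)/((k:ℝ)+1)) := by
        push_cast
        field_simp
        ring
      calc S m * (((↑(k+1):ℝ)+1)/((m:ℝ)+1)) ^ p
          = S m * ((((k:ℝ)+1)/((m:ℝ)+1)) ^ p * ((((k:ℝ)+2)/((k:ℝ)+1)) ^ p)) := by
            rw [← Real.mul_rpow (by positivity) (by positivity), ← hbases]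
        _ ≤ S m * ((((k:ℝ)+1)/((m:ℝ)+1)) ^ p * (1 + x)) := by
            apply mul_le_mul_of_nonneg_left _ hSm.le
            exact mul_le_mul_of_nonneg_left hrpow (by positivity)
        _ = (S m * (((k:ℝ)+1)/((m:ℝ)+1)) ^ p) * (1 + x) := by ring
        _ ≤ S k * (1 + x) := mul_le_mul_of_nonneg_right ih (by positivity)
        _ ≤ S (k+1) := hmul
  -- final combination
  have hn1 : 1 ≤ n := hm.trans hmn
  have hn0 : (0:ℝ) < (n:ℝ) := by exact_mod_cast hn1
  have hm0 : (0:ℝ) < (m:ℝ) := by exact_mod_cast hm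
  have hmn' : (m:ℝ) ≤ (n:ℝ) := by exact_mod_cast hmn
  have hq : (n:ℝ)/(2*m) ≤ ((n:ℝ)+1)/((m:ℝ)+1) := by
    rw [div_le_div_iff₀ (by positivity) (by positivity)]
    have hm1 : (1:ℝ) ≤ (m:ℝ) := by exact_mod_cast hm
    nlinarith [mul_nonneg hn0.le (sub_nonneg.mpr hm1)]
  have hchain : (m:ℝ) * ξ m * (((n:ℝ)/m) ^ p / 2 ^ p) ≤ M * n * ξ n := by
    have e2 : ((n:ℝ)/(2*m)) ^ p = ((n:ℝ)/m) ^ p / 2 ^ p := by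
      rw [show (n:ℝ)/(2*m) = ((n:ℝ)/m)/2 by rw [div_div, mul_comm],
        Real.div_rpow (by positivity) (by norm_num)]
    rw [← e2]
    calc (m:ℝ) * ξ m * ((n:ℝ)/(2*m)) ^ p
        ≤ S m * (((n:ℝ)+1)/((m:ℝ)+1)) ^ p := by
          exact mul_le_mul hmS (Real.rpow_le_rpow (by positivity) hq hp0.le)
            (by positivity) (hSpos m hm).le
      _ ≤ S n := key n hmn
      _ ≤ M * n * ξ n := hSle n hn1
  have e1 : ((m:ℝ)/n) ^ (1-p) = ((m:ℝ)/n) * ((n:ℝ)/m) ^ p := by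
    rw [Real.rpow_sub (by positivity), Real.rpow_one,
      show ((m:ℝ)/n) ^ p = (((n:ℝ)/m) ^ p)⁻¹ by
        rw [← Real.inv_rpow (by positivity), inv_div],
      div_eq_mul_inv, inv_inv]
  rw [e1]
  have h2p : (0:ℝ) < (2:ℝ) ^ p := Real.rpow_pos_of_pos (by norm_num) p
  have hnm : (0:ℝ) < ((n:ℝ)/m) ^ p := Real.rpow_pos_of_pos (by positivity) p
  have hξm : 0 < ξ m := hpos m hm
  rw [div_mul_eq_mul_div, div_mul_eq_mul_div, div_le_iff₀ (by positivity)]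
  calc 1 * (((m:ℝ)/n) * ((n:ℝ)/m) ^ p) * ξ m
      = ((m:ℝ) * ξ m * (((n:ℝ)/m) ^ p / 2 ^ p)) * ((2:ℝ) ^ p / n) := by
        field_simp
    _ ≤ (M * n * ξ n) * ((2:ℝ) ^ p / n) := by
        exact mul_le_mul_of_nonneg_right hchain (by positivity)
    _ = ξ n * (M * (2:ℝ) ^ p) := by field_simp
end

section
/- Let ξ be a nonincreasing sequence of nonnegative reals. If there exist C > 0 and 0 < p < 1 with ξ_n ≥ C (m/n)^p ξ_m for all n ≥ m ≥ 1, then (ξ_a)_n ≤ (1/((1-p)C)) ξ_n for all n, i.e., ξ is regular. -/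
open scoped BigOperators
open Filter

/-- Key per-term bound: `(1-p) * j^(-p) ≤ j^(1-p) - (j-1)^(1-p)` for `1 ≤ j`. -/
lemma key_step {p : ℝ} (hp0 : 0 < p) (hp1 : p < 1) {j : ℕ} (hj : 1 ≤ j) :
    (1 - p) * (j : ℝ) ^ (-p) ≤ (j : ℝ) ^ (1 - p) - ((j : ℝ) - 1) ^ (1 - p) := by
  have hjpos : (0 : ℝ) < j := by exact_mod_cast hj
  have hs : (-1 : ℝ) ≤ -(1 / (j : ℝ)) := by
    rw [neg_le_neg_iff]
    exact div_le_one_of_le₀ (by exact_mod_cast hj) (by positivity)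
  have hB := rpow_one_add_le_one_add_mul_self hs (p := 1 - p) (by linarith) (by linarith)
  -- (1 - 1/j)^(1-p) ≤ 1 - (1-p)/j
  have hB' : (1 - 1 / (j : ℝ)) ^ (1 - p) ≤ 1 - (1 - p) * (1 / (j : ℝ)) := by
    have he : (1 : ℝ) + -(1 / j) = 1 - 1 / j := by ring
    rw [he] at hB
    linarith [hB]
  have hmulpos : (0 : ℝ) ≤ (j : ℝ) ^ (1 - p) := Real.rpow_nonneg hjpos.le _
  have hmul := mul_le_mul_of_nonneg_left hB' hmulpos
  have hsub : ((j : ℝ) - 1) = (j : ℝ) * (1 - 1 / j) := by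
    field_simp
  rw [hsub]
  have h1 : (0 : ℝ) ≤ 1 - 1 / (j : ℝ) := by
    have := div_le_one_of_le₀ (by exact_mod_cast hj : (1:ℝ) ≤ (j:ℝ)) hjpos.le
    linarith
  rw [Real.mul_rpow hjpos.le h1]
  have hpow : (j : ℝ) ^ (1 - p) * (1 / (j : ℝ)) = (j : ℝ) ^ (-p) := by
    rw [one_div, ← Real.rpow_neg_one (j : ℝ), ← Real.rpow_add hjpos]
    ring_nf
  have hexp : (j : ℝ) ^ (1 - p) * (1 - (1 - p) * (1 / (j : ℝ)))
      = (j : ℝ) ^ (1 - p) - (1 - p) * ((j : ℝ) ^ (1 - p) * (1 / (j : ℝ))) := by ring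
  rw [hpow] at hexp
  have hmul' := hmul
  rw [hexp] at hmul'
  linarith

/-- Sum bound: `(1-p) * ∑_{j=1}^n j^(-p) ≤ n^(1-p)`. -/
lemma sum_bound {p : ℝ} (hp0 : 0 < p) (hp1 : p < 1) (n : ℕ) :
    (1 - p) * ∑ j ∈ Finset.Icc 1 n, (j : ℝ) ^ (-p) ≤ (n : ℝ) ^ (1 - p) := by
  induction n with
  | zero => simp [Real.zero_rpow (by linarith : (1:ℝ) - p ≠ 0)]
  | succ n ih =>
    rw [Finset.sum_Icc_succ_top (by omega : 1 ≤ n + 1)]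
    have hk := key_step hp0 hp1 (j := n + 1) (by omega)
    push_cast at hk ⊢
    have : ((n : ℝ) + 1 - 1) = (n : ℝ) := by ring
    rw [this] at hk
    nlinarith [ih, hk]

theorem stmt_16 (ξ : ℕ → ℝ)
    (hmono : ∀ n, 1 ≤ n → ξ (n + 1) ≤ ξ n)
    (hnn : ∀ n, 1 ≤ n → 0 ≤ ξ n)
    (C p : ℝ) (hC : 0 < C) (hp0 : 0 < p) (hp1 : p < 1)
    (h : ∀ m n : ℕ, 1 ≤ m → m ≤ n → C * ((m : ℝ) / n) ^ p * ξ m ≤ ξ n) :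
    ∀ n, 1 ≤ n → ces ξ n ≤ (1 / ((1 - p) * C)) * ξ n := by
  intro n hn
  have hnpos : (0 : ℝ) < n := by exact_mod_cast hn
  have hnnn : 0 ≤ ξ n := hnn n hn
  -- per-term bound: ξ j ≤ (1/C) * (n/j)^p * ξ n
  have hterm : ∀ j ∈ Finset.Icc 1 n, ξ j ≤ (1 / C) * ((n : ℝ) / j) ^ p * ξ n := by
    intro j hj
    rw [Finset.mem_Icc] at hj
    have hj1 : (0 : ℝ) < j := by exact_mod_cast hj.1
    have hjn : (j : ℝ) ≤ n := by exact_mod_cast hj.2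
    have := h j n hj.1 hj.2
    have hpowpos : (0 : ℝ) < ((j : ℝ) / n) ^ p := Real.rpow_pos_of_pos (by positivity) _
    have hbpos : (0 : ℝ) < ((n : ℝ) / j) ^ p := Real.rpow_pos_of_pos (by positivity) _
    have hab : ((j : ℝ) / n) ^ p * ((n : ℝ) / j) ^ p = 1 := by
      rw [← Real.mul_rpow (by positivity) (by positivity)]
      rw [div_mul_div_comm]
      rw [mul_comm (j : ℝ) (n : ℝ), div_self (by positivity)]
      exact Real.one_rpow _
    have h3 := mul_le_mul_of_nonneg_right this hbpos.le
    have h4 : C * ((j : ℝ) / n) ^ p * ξ j * ((n : ℝ) / j) ^ p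
        = C * ξ j * (((j : ℝ) / n) ^ p * ((n : ℝ) / j) ^ p) := by ring
    rw [h4, hab, mul_one] at h3
    have goal' : ξ j ≤ ((n : ℝ) / j) ^ p * ξ n / C := by
      rw [le_div_iff₀ hC]
      nlinarith [h3]
    calc ξ j ≤ ((n : ℝ) / j) ^ p * ξ n / C := goal'
      _ = 1 / C * ((n : ℝ) / j) ^ p * ξ n := by ring
  have hsum : ∑ j ∈ Finset.Icc 1 n, ξ j ≤
      ∑ j ∈ Finset.Icc 1 n, (1 / C) * ((n : ℝ) / j) ^ p * ξ n :=
    Finset.sum_le_sum hterm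
  -- rewrite (n/j)^p = n^p * j^(-p)
  have hrw : ∀ j ∈ Finset.Icc 1 n,
      (1 / C) * ((n : ℝ) / j) ^ p * ξ n = ((ξ n / C) * (n : ℝ) ^ p) * (j : ℝ) ^ (-p) := by
    intro j hj
    rw [Finset.mem_Icc] at hj
    have hj1 : (0 : ℝ) < j := by exact_mod_cast hj.1
    rw [Real.div_rpow hnpos.le hj1.le, Real.rpow_neg hj1.le]
    field_simp
  rw [Finset.sum_congr rfl hrw, ← Finset.mul_sum] at hsum
  have hsb := sum_bound hp0 hp1 n
  have h1p : (0 : ℝ) < 1 - p := by linarith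
  have hsumle : ∑ j ∈ Finset.Icc 1 n, (j : ℝ) ^ (-p) ≤ (n : ℝ) ^ (1 - p) / (1 - p) := by
    rw [le_div_iff₀ h1p]; linarith [hsb]
  have hcoef : 0 ≤ (ξ n / C) * (n : ℝ) ^ p := by positivity
  have hsum2 : ∑ j ∈ Finset.Icc 1 n, ξ j ≤
      ((ξ n / C) * (n : ℝ) ^ p) * ((n : ℝ) ^ (1 - p) / (1 - p)) :=
    hsum.trans (mul_le_mul_of_nonneg_left hsumle hcoef)
  have hpows : (n : ℝ) ^ p * (n : ℝ) ^ (1 - p) = n := by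
    rw [← Real.rpow_add hnpos]
    simp
  unfold ces
  rw [one_div, inv_mul_le_iff₀ hnpos]
  calc ∑ j ∈ Finset.Icc 1 n, ξ j ≤ ((ξ n / C) * (n : ℝ) ^ p) * ((n : ℝ) ^ (1 - p) / (1 - p)) := hsum2
    _ = (n : ℝ) * (1 / ((1 - p) * C) * ξ n) := by
        have he : ξ n / C * (n : ℝ) ^ p * ((n : ℝ) ^ (1 - p) / (1 - p))
            = ξ n / C * ((n : ℝ) ^ p * (n : ℝ) ^ (1 - p)) / (1 - p) := by ring
        rw [he, hpows]
        field_simp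
end

section
/- Let ξ and η be two monotonizations of the same summable sequence of complex numbers: suppose ξ, η : ℕ → ℂ are rearrangements of each other, |ξ| and |η| are both nonincreasing, and ξ is summable. Then |(η_{a∞})_n - (ξ_{a∞})_n| ≤ 2|ξ_n| for all n, where (ζ_{a∞})_n := (1/n)∑_{j>n} ζ_j. -/
open scoped BigOperators
open Filter

noncomputable def ainfC (ζ : ℕ → ℂ) (n : ℕ) : ℂ := (1 / (n : ℂ)) * ∑' k : ℕ, ζ (n + 1 + k)

-- antitone on indices ≥ 1
lemma aux_anti (ζ : ℕ → ℂ) (h : ∀ n, 1 ≤ n → ‖ζ (n + 1)‖ ≤ ‖ζ n‖) :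
    ∀ a b, 1 ≤ a → a ≤ b → ‖ζ b‖ ≤ ‖ζ a‖ := by
  intro a b ha hab
  induction b with
  | zero => omega
  | succ m ih =>
    rcases Nat.lt_or_ge a (m + 1) with hlt | hge
    · exact le_trans (h m (by omega)) (ih (by omega))
    · have : a = m + 1 := by omega
      simp [this]

-- pigeonhole: some k < n has n - 1 ≤ e k
lemma aux_pigeon (e : ℕ ≃ ℕ) (n : ℕ) (hn : 1 ≤ n) :
    ∃ k, k < n ∧ n - 1 ≤ e k := by
  by_contra hc
  push_neg at hc
  have hsub : (Finset.range n).image e ⊆ Finset.range (n - 1) := by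
    intro x hx
    simp only [Finset.mem_image, Finset.mem_range] at hx ⊢
    obtain ⟨k, hk, rfl⟩ := hx
    exact hc k hk
  have h1 : ((Finset.range n).image e).card = n := by
    rw [Finset.card_image_of_injective _ e.injective, Finset.card_range]
  have h2 := Finset.card_le_card hsub
  rw [h1, Finset.card_range] at h2
  omega

lemma aux_norm_le (ξ η : ℕ → ℂ) (e : ℕ ≃ ℕ)
    (hre : ∀ n : ℕ, η (n + 1) = ξ (e n + 1))
    (hξmono : ∀ n, 1 ≤ n → ‖ξ (n + 1)‖ ≤ ‖ξ n‖)
    (hηmono : ∀ n, 1 ≤ n → ‖η (n + 1)‖ ≤ ‖η n‖) :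
    ∀ n, 1 ≤ n → ‖η n‖ ≤ ‖ξ n‖ := by
  intro n hn
  obtain ⟨k, hk, hek⟩ := aux_pigeon e n hn
  calc ‖η n‖ ≤ ‖η (k + 1)‖ := aux_anti η hηmono (k + 1) n (by omega) (by omega)
    _ = ‖ξ (e k + 1)‖ := by rw [hre k]
    _ ≤ ‖ξ n‖ := aux_anti ξ hξmono n (e k + 1) hn (by omega)

theorem stmt_18 (ξ η : ℕ → ℂ) (e : ℕ ≃ ℕ)
    (hre : ∀ n : ℕ, η (n + 1) = ξ (e n + 1))
    (hξmono : ∀ n, 1 ≤ n → ‖ξ (n + 1)‖ ≤ ‖ξ n‖)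
    (hηmono : ∀ n, 1 ≤ n → ‖η (n + 1)‖ ≤ ‖η n‖)
    (hsum : Summable fun n : ℕ => ‖ξ (n + 1)‖) :
    ∀ n, 1 ≤ n → ‖ainfC η n - ainfC ξ n‖ ≤ 2 * ‖ξ n‖ := by
  intro n hn
  set f : ℕ → ℂ := fun k => ξ (k + 1) with hf
  set g : ℕ → ℂ := fun k => η (k + 1) with hg
  have hgf : g = f ∘ e := by
    funext k; simp [hf, hg, hre k]
  have hSf : Summable f := Summable.of_norm hsum
  have hSg : Summable g := by
    rw [hgf]; exact e.summable_iff.2 hSf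
  -- tsum of full sums are equal
  have htsum : ∑' k, g k = ∑' k, f k := by
    rw [hgf]; exact e.tsum_eq f
  -- express tails
  have tailξ : (∑' k : ℕ, ξ (n + 1 + k)) = (∑' k, f k) - ∑ i ∈ Finset.range n, f i := by
    have h1 : (∑' k : ℕ, ξ (n + 1 + k)) = ∑' k : ℕ, f (k + n) := by
      apply tsum_congr; intro k; simp only [hf]; congr 1; omega
    rw [h1, eq_sub_iff_add_eq, add_comm]
    exact Summable.sum_add_tsum_nat_add n hSf
  have tailη : (∑' k : ℕ, η (n + 1 + k)) = (∑' k, g k) - ∑ i ∈ Finset.range n, g i := by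
    have h1 : (∑' k : ℕ, η (n + 1 + k)) = ∑' k : ℕ, g (k + n) := by
      apply tsum_congr; intro k; simp only [hg]; congr 1; omega
    rw [h1, eq_sub_iff_add_eq, add_comm]
    exact Summable.sum_add_tsum_nat_add n hSg
  -- the difference of tails
  set A : Finset ℕ := Finset.range n with hA
  set B : Finset ℕ := A.image e with hB
  have hsumg : ∑ i ∈ A, g i = ∑ i ∈ B, f i := by
    rw [hB, Finset.sum_image (fun a _ b _ h => e.injective h)]
    simp [hgf]
  have hdiff : (∑' k : ℕ, η (n + 1 + k)) - (∑' k : ℕ, ξ (n + 1 + k))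
      = ∑ i ∈ A \ B, f i - ∑ i ∈ B \ A, f i := by
    rw [tailξ, tailη, htsum, hsumg]
    have hA' := Finset.sum_sdiff (f := f) (Finset.inter_subset_left (s₁ := A) (s₂ := B))
    have hB' := Finset.sum_sdiff (f := f) (Finset.inter_subset_left (s₁ := B) (s₂ := A))
    rw [Finset.sdiff_inter_self_left] at hA' hB'
    rw [Finset.inter_comm] at hB'
    linear_combination hB' - hA'
  -- bound each stray term by ‖ξ n‖
  have hbnd1 : ∀ i ∈ A \ B, ‖f i‖ ≤ ‖ξ n‖ := by
    intro i hi
    rw [Finset.mem_sdiff, hA, hB, Finset.mem_range] at hi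
    obtain ⟨hilt, hni⟩ := hi
    -- i not in image of range n under e, so e.symm i ≥ n
    have hsymm : n ≤ e.symm i := by
      by_contra hc
      push_neg at hc
      exact hni (Finset.mem_image.2 ⟨e.symm i, Finset.mem_range.2 hc, e.apply_symm_apply i⟩)
    have : f i = g (e.symm i) := by
      rw [hgf]; simp
    rw [this]
    calc ‖g (e.symm i)‖ = ‖η (e.symm i + 1)‖ := rfl
      _ ≤ ‖η n‖ := aux_anti η hηmono n (e.symm i + 1) hn (by omega)
      _ ≤ ‖ξ n‖ := aux_norm_le ξ η e hre hξmono hηmono n hn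
  have hbnd2 : ∀ i ∈ B \ A, ‖f i‖ ≤ ‖ξ n‖ := by
    intro i hi
    rw [Finset.mem_sdiff, hA, Finset.mem_range] at hi
    obtain ⟨_, hni⟩ := hi
    have hni' : n ≤ i := by omega
    exact aux_anti ξ hξmono n (i + 1) hn (by omega)
  have hcard1 : (A \ B).card ≤ n := le_trans (Finset.card_le_card (Finset.sdiff_subset)) (by simp [hA])
  have hcard2 : (B \ A).card ≤ n := le_trans (Finset.card_le_card (Finset.sdiff_subset))
    (by rw [hB]; exact le_trans Finset.card_image_le (by simp [hA]))
  have hξn0 : (0:ℝ) ≤ ‖ξ n‖ := norm_nonneg _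
  have hnorm : ‖(∑' k : ℕ, η (n + 1 + k)) - (∑' k : ℕ, ξ (n + 1 + k))‖ ≤ 2 * n * ‖ξ n‖ := by
    rw [hdiff]
    calc ‖∑ i ∈ A \ B, f i - ∑ i ∈ B \ A, f i‖
        ≤ ‖∑ i ∈ A \ B, f i‖ + ‖∑ i ∈ B \ A, f i‖ := norm_sub_le _ _
      _ ≤ (∑ i ∈ A \ B, ‖f i‖) + ∑ i ∈ B \ A, ‖f i‖ :=
          add_le_add (norm_sum_le _ _) (norm_sum_le _ _)
      _ ≤ (A \ B).card * ‖ξ n‖ + (B \ A).card * ‖ξ n‖ := by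
          apply add_le_add
          · exact le_trans (Finset.sum_le_card_nsmul _ _ _ hbnd1) (by simp [nsmul_eq_mul])
          · exact le_trans (Finset.sum_le_card_nsmul _ _ _ hbnd2) (by simp [nsmul_eq_mul])
      _ ≤ n * ‖ξ n‖ + n * ‖ξ n‖ := by
          apply add_le_add <;> apply mul_le_mul_of_nonneg_right _ hξn0
          · exact_mod_cast hcard1
          · exact_mod_cast hcard2
      _ = 2 * n * ‖ξ n‖ := by ring
  -- conclude
  unfold ainfC
  rw [← mul_sub, norm_mul]
  have h1n : ‖(1 / (n:ℂ))‖ = 1 / (n:ℝ) := by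
    simp [norm_div]
  rw [h1n]
  have hnpos : (0:ℝ) < n := by exact_mod_cast hn
  rw [div_mul_eq_mul_div, one_mul, div_le_iff₀ hnpos]
  calc ‖(∑' k : ℕ, η (n + 1 + k)) - (∑' k : ℕ, ξ (n + 1 + k))‖ ≤ 2 * n * ‖ξ n‖ := hnorm
    _ = 2 * ‖ξ n‖ * n := by ring
end

section
/- Let m_k = (k!)² and define η_j = 1/m_k² for m_{k-1} < j ≤ m_k (with m_0 = 1, η_1 = 1). Then η is nonincreasing, η_j ≤ 1/j² for all j, but it is not the case that η_j = o(1/j²); i.e., j² η_j does not tend to 0. -/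
open scoped BigOperators
open Filter

def mseq (k : ℕ) : ℕ := (Nat.factorial k) ^ 2

noncomputable def blk (j : ℕ) : ℕ :=
  Nat.find (⟨j, le_trans (Nat.self_le_factorial j) (Nat.le_self_pow two_ne_zero _)⟩ :
    ∃ k, j ≤ mseq k)

noncomputable def eta (j : ℕ) : ℝ := ((mseq (blk j) : ℝ) ^ 2)⁻¹

lemma mseq_pos (k : ℕ) : 0 < mseq k := pow_pos k.factorial_pos 2

lemma mseq_mono : Monotone mseq := fun a b h =>
  Nat.pow_le_pow_left (Nat.factorial_le h) 2

lemma le_mseq_blk (j : ℕ) : j ≤ mseq (blk j) :=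
  Nat.find_spec (⟨j, le_trans (Nat.self_le_factorial j) (Nat.le_self_pow two_ne_zero _)⟩ :
    ∃ k, j ≤ mseq k)

lemma blk_le {j k : ℕ} (h : j ≤ mseq k) : blk j ≤ k :=
  Nat.find_le (p := fun k => j ≤ mseq k) h

lemma blk_mseq (k : ℕ) : mseq (blk (mseq k)) = mseq k :=
  le_antisymm (mseq_mono (blk_le le_rfl)) (le_mseq_blk _)

lemma self_le_mseq (k : ℕ) : k ≤ mseq k :=
  le_trans (Nat.self_le_factorial k) (Nat.le_self_pow two_ne_zero _)

theorem stmt_19 :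
    (∀ n, 1 ≤ n → eta (n + 1) ≤ eta n) ∧
    (∀ j, 1 ≤ j → eta j ≤ 1 / (j : ℝ) ^ 2) ∧
    ¬ Tendsto (fun j : ℕ => (j : ℝ) ^ 2 * eta j) atTop (nhds 0) := by
  refine ⟨?_, ?_, ?_⟩
  · intro n _
    have hb : blk n ≤ blk (n + 1) :=
      Nat.find_mono (fun k hk => le_trans (Nat.le_succ n) hk)
    have : (mseq (blk n) : ℝ) ^ 2 ≤ (mseq (blk (n + 1)) : ℝ) ^ 2 := by
      have h2 := mseq_mono hb
      exact_mod_cast Nat.pow_le_pow_left h2 2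
    have hp : (0:ℝ) < (mseq (blk n) : ℝ) ^ 2 := by
      have := mseq_pos (blk n); positivity
    exact inv_anti₀ hp this
  · intro j hj
    rw [eta, one_div]
    apply inv_anti₀
    · have := mseq_pos (blk j); positivity
    · exact pow_le_pow_left₀ (by positivity) (by exact_mod_cast le_mseq_blk j) 2
  · intro h
    have h1 := (h.eventually (gt_mem_nhds (by norm_num : (0:ℝ) < 1/2))).exists_forall_of_atTop
    obtain ⟨N, hN⟩ := h1
    have hval : ((mseq N : ℝ)) ^ 2 * eta (mseq N) = 1 := by
      rw [eta, blk_mseq]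
      have : (mseq N : ℝ) ^ 2 ≠ 0 := by
        have := mseq_pos N; positivity
      field_simp
      exact div_self (by have := mseq_pos N; positivity)
    have := hN (mseq N) (self_le_mseq N)
    rw [hval] at this
    norm_num at this
end
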